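/- Let $K$ be a field, $w \in K$ a primitive $N$-th root of unity ($N \ge 2$), and $i, j \in \mathbb{Z}$. Define $R(k,l) = w^{j-l} - w^{k-1-i}$ for $0 \le l < k$, $R(k,k) = 1$, and define $\lambda(k,l)$ by the recursion $\lambda(0,0)=1$, $\lambda(k,0)=R(k,0)\lambda(k-1,0)$, $\lambda(k,l)=R(k,l)\lambda(k-1,l)+\lambda(k-1,l-1)$ for $0<l<k$, $\lambda(k,k)=1$. Let $m \ge 0$ be the smallest integer with $R(m+1,0) = 0$. Then for every $k > m$ and $0 \le l \le m$, one has $\lambda(k,l) = 0$. -/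

import Mathlib

/-- `R(k,l) = w^{j-l} - w^{k-1-i}` for `l < k`, and `R(k,k) = 1`. -/
def Rc {K : Type*} [Field K] (w : K) (i j : ℤ) (k l : ℕ) : K :=
  if l < k then w ^ (j - (l : ℤ)) - w ^ ((k : ℤ) - 1 - i) else 1

/-- The recursively defined coefficients `λ(k,l)`. -/
def lam {K : Type*} [Field K] (w : K) (i j : ℤ) : ℕ → ℕ → K
  | 0, 0 => 1
  | 0, _ + 1 => 0
  | k + 1, 0 => Rc w i j (k + 1) 0 * lam w i j k 0
  | k + 1, l + 1 =>
      if l + 1 = k + 1 then 1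
      else if l + 1 < k + 1 then
        Rc w i j (k + 1) (l + 1) * lam w i j k (l + 1) + lam w i j k l
      else 0

/-- unconditioned coefficient -/
def rr {K : Type*} [Field K] (w : K) (i j : ℤ) (k l : ℕ) : K :=
  w ^ (j - (l : ℤ)) - w ^ ((k : ℤ) - 1 - i)

section aux
variable {K : Type*} [Field K] (w : K) (i j : ℤ)

lemma lam_zero_of_lt {k l : ℕ} (h : k < l) : lam w i j k l = 0 := by
  match k, l, h with
  | 0, l+1, h => simp [lam]
  | k+1, l+1, h =>
    have h1 : ¬ (l + 1 = k + 1) := by omega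
    have h2 : ¬ (l + 1 < k + 1) := by omega
    simp [lam, h1, h2]
    omega

lemma lam_diag (k : ℕ) : lam w i j k k = 1 := by
  match k with
  | 0 => simp [lam]
  | k+1 => simp [lam]

lemma lam_rec0 (k : ℕ) :
    lam w i j (k+1) 0 = rr w i j (k+1) 0 * lam w i j k 0 := by
  have : Rc w i j (k+1) 0 = rr w i j (k+1) 0 := by
    simp [Rc, rr]
  rw [lam, this]

lemma lam_rec (k l : ℕ) :
    lam w i j (k+1) (l+1) = rr w i j (k+1) (l+1) * lam w i j k (l+1) + lam w i j k l := by
  rcases lt_trichotomy (l+1) (k+1) with h | h | h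
  · have h1 : ¬ (l + 1 = k + 1) := by omega
    have hr : Rc w i j (k+1) (l+1) = rr w i j (k+1) (l+1) := by
      simp [Rc, rr, h]
    rw [lam, if_neg h1, if_pos h, hr]
  · have hk : l = k := by omega
    subst hk
    rw [lam, if_pos rfl, lam_zero_of_lt w i j (by omega : l < l+1), lam_diag]
    ring
  · rw [lam, if_neg (by omega), if_neg (by omega),
      lam_zero_of_lt w i j (by omega : k < l+1), lam_zero_of_lt w i j (by omega : k < l)]
    ring

end aux
section aux2
variable {K : Type*} [Field K] (w : K) (i j : ℤ)

lemma rr_shift1 (k l : ℕ) : rr w i j (k+2) l = rr w (i-1) j (k+1) l := by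
  unfold rr
  congr 2
  push_cast; ring

lemma rr_shift2 (k l : ℕ) : rr w i (j-1) k l = rr w i j k (l+1) := by
  unfold rr
  congr 2
  push_cast; ring

lemma star0 (k : ℕ) :
    lam w i j (k+1) 0 = (w ^ j - w ^ (-i)) * lam w (i-1) j k 0 := by
  induction k with
  | zero =>
    rw [lam_rec0]
    simp [lam, rr]
  | succ k ih =>
    rw [lam_rec0, ih, rr_shift1, lam_rec0]
    ring

lemma star_succ (k l : ℕ) :
    lam w i j (k+1) (l+1) =
      (w ^ j - w ^ (-i)) * lam w (i-1) j k (l+1) + lam w (i-1) (j-1) k l := by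
  induction k generalizing l with
  | zero =>
    match l with
    | 0 => simp [lam, lam_diag]
    | l+1 =>
      rw [lam_zero_of_lt w i j (by omega : 1 < l+2),
        lam_zero_of_lt w (i-1) j (by omega : 0 < l+2),
        lam_zero_of_lt w (i-1) (j-1) (by omega : 0 < l+1)]
      ring
  | succ k ih =>
    rw [lam_rec, ih, rr_shift1]
    match l with
    | 0 =>
      rw [star0, lam_rec, lam_rec0, ← rr_shift2]
      ring
    | l+1 =>
      rw [ih, lam_rec, lam_rec, ← rr_shift2]
      ring

end aux2
section phi
variable {K : Type*} [Field K] {w : K}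

lemma phi (hw0 : w ≠ 0) :
    ∀ m : ℕ, ∀ i j : ℤ, w ^ j = w ^ ((m : ℤ) - i) →
      ∀ l : ℕ, l ≤ m → lam w i j (m+1) l = 0 := by
  intro m
  induction m using Nat.strong_induction_on with
  | _ m ih =>
    match m with
    | 0 =>
      intro i j hc l hl
      interval_cases l
      rw [lam_rec0, lam_diag]
      simp only [rr]
      rw [mul_one, sub_eq_zero,
        show j - ((0:ℕ) : ℤ) = j by push_cast; ring, hc]
      norm_num
    | 1 =>
      intro i j hc l hl
      have hc' : w ^ (j - 1) = w ^ (-i) := by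
        rw [zpow_sub₀ hw0, hc, ← zpow_sub₀ hw0]
        congr 1; push_cast; ring
      interval_cases l
      · rw [lam_rec0]
        have : rr w i j 2 0 = 0 := by
          simp only [rr]
          rw [sub_eq_zero, show j - ((0:ℕ) : ℤ) = j by push_cast; ring, hc]
          norm_num
        rw [this, zero_mul]
      · rw [lam_rec, lam_diag, lam_rec0, lam_diag]
        simp only [rr]
        rw [mul_one, mul_one]
        have e1 : w ^ (j - ((1:ℕ) : ℤ)) = w ^ (-i) := by
          rw [show j - ((1:ℕ) : ℤ) = j - 1 by push_cast; ring, hc']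
        have e2 : w ^ (((2:ℕ) : ℤ) - 1 - i) = w ^ j := by
          rw [hc]
          norm_num
        have e3 : w ^ (j - ((0:ℕ) : ℤ)) = w ^ j := by norm_num
        have e4 : w ^ (((1:ℕ) : ℤ) - 1 - i) = w ^ (-i) := by
          congr 1
          push_cast; ring
        rw [e1, e2, e3, e4]; ring
    | (m+2) =>
      intro i j hc l hl
      have hc1 : w ^ j = w ^ (((m+1 : ℕ) : ℤ) - (i-1)) := by
        rw [hc]; congr 1; push_cast; ring
      have hc2 : w ^ (j-1) = w ^ (((m : ℕ) : ℤ) - (i-1)) := by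
        rw [zpow_sub₀ hw0, hc, ← zpow_sub₀ hw0]
        congr 1; push_cast; ring
      have IH1 := ih (m+1) (by omega) (i-1) j hc1
      have IH2 := ih m (by omega) (i-1) (j-1) hc2
      match l with
      | 0 =>
        rw [show m+2+1 = (m+2)+1 from rfl, star0, IH1 0 (by omega), mul_zero]
      | l+1 =>
        rw [show m+2+1 = (m+2)+1 from rfl, star_succ]
        rcases Nat.lt_or_ge (l+1) (m+2) with h | h
        · rw [IH1 (l+1) (by omega)]
          match l, h with
          | 0, _ =>
            rw [lam_rec0, IH2 0 (by omega)]; ring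
          | l+1, h =>
            rw [lam_rec, IH2 (l+1) (by omega), IH2 l (by omega)]; ring
        · -- l + 1 = m + 2
          have hl2 : l = m + 1 := by omega
          subst hl2
          rw [lam_diag, show m+2 = (m+1)+1 from rfl, lam_rec, lam_diag,
            IH2 m (by omega), mul_one, mul_one, add_zero]
          simp only [rr]
          have e1 : w ^ (j - 1 - ((m+1 : ℕ) : ℤ)) = w ^ (-i) := by
            rw [show j - 1 - ((m+1 : ℕ) : ℤ) = j - (((m:ℕ) : ℤ) + 2) by push_cast; ring,
              zpow_sub₀ hw0, hc, ← zpow_sub₀ hw0]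
            congr 1; push_cast; ring
          have e2 : w ^ (((m+1+1 : ℕ) : ℤ) - 1 - (i-1)) = w ^ j := by
            rw [hc]; congr 1; push_cast; ring
          rw [e1, e2]; ring
end phi

theorem stmt15 {K : Type*} [Field K] (N : ℕ) (hN : 2 ≤ N)
    (w : K) (hw : IsPrimitiveRoot w N) (i j : ℤ)
    (m : ℕ) (hm : Rc w i j (m + 1) 0 = 0)
    (hmin : ∀ k : ℕ, k < m → Rc w i j (k + 1) 0 ≠ 0) :
    ∀ k l : ℕ, m < k → l ≤ m → lam w i j k l = 0 := by
  have hw0 : w ≠ 0 := hw.ne_zero (by omega)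
  have hc : w ^ j = w ^ ((m : ℤ) - i) := by
    simp only [Rc, if_pos (Nat.succ_pos m), sub_eq_zero] at hm
    calc w ^ j = w ^ (j - ((0:ℕ) : ℤ)) := by norm_num
    _ = w ^ (((m+1 : ℕ) : ℤ) - 1 - i) := hm
    _ = w ^ ((m : ℤ) - i) := by congr 1; push_cast; ring
  have main : ∀ d : ℕ, ∀ l ≤ m, lam w i j (m+1+d) l = 0 := by
    intro d
    induction d with
    | zero => intro l hl; exact phi hw0 m i j hc l hl
    | succ d ih =>
      intro l hl
      have e : m+1+(d+1) = (m+1+d)+1 := rfl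
      rw [e]
      match l with
      | 0 => rw [lam_rec0, ih 0 (by omega), mul_zero]
      | l+1 => rw [lam_rec, ih (l+1) hl, ih l (by omega), mul_zero, add_zero]
  intro k l hk hl
  obtain ⟨d, rfl⟩ : ∃ d, k = m+1+d := ⟨k - (m+1), by omega⟩
  exact main d l hl
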